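/- Let (E,d) be a complete separable metric space and μ a probability measure on E with finite second moment. For each ε ∈ (0,ε₀) let α^ε, β^ε ∈ Π(μ,μ) with disintegrations (α^ε_x) and (β^ε_x) with respect to the first coordinate, and assume: (i) there are constants c(ε) > 0 with limsup_{ε↓0} c(ε)/ε < ∞ such that for μ-a.e. x, W₂²(η, β^ε_x) ≤ c(ε)·H(η|β^ε_x) for every probability measure η on E; (ii) H(α^ε|β^ε)/ε² → 0 as ε ↓ 0; (iii) (ξ_ε)_{ε>0} are Lipschitz functions on E with sup_{ε>0} √ε·Lip(ξ_ε) < ∞; (iv) ξ ∈ L²(μ) with ε⁻¹‖ξ_ε − ξ‖_{L²(μ)} → 0; (v) there is L ∈ L²(μ) with ε⁻¹(∫ ξ dβ^ε_x − ξ(x)) → L(x) in L²(μ) as ε ↓ 0. Then ε⁻¹(∫ ξ dα^ε_x − ξ(x)) → L(x) in L²(μ) as ε ↓ 0. -/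

import Mathlib

open MeasureTheory ProbabilityTheory Filter Topology
open scoped Classical ENNReal NNReal

/-- Relative entropy (KL divergence) of `α` with respect to `β`, valued in `EReal`. -/
noncomputable def relEnt {Ω : Type*} [MeasurableSpace Ω] (α β : Measure Ω) : EReal :=
  if α ≪ β ∧ Integrable (fun ω => Real.log ((α.rnDeriv β) ω).toReal) α
  then ((∫ ω, Real.log ((α.rnDeriv β) ω).toReal ∂α : ℝ) : EReal)
  else ⊤

/-- Squared 2-Wasserstein distance: infimum over couplings of the integrated squared
distance. -/
noncomputable def W2sq {X : Type*} [MeasurableSpace X] [PseudoMetricSpace X]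
    (μ ν : Measure X) : ℝ≥0∞ :=
  ⨅ γ ∈ {γ : Measure (X × X) | γ.fst = μ ∧ γ.snd = ν},
    ∫⁻ p, ENNReal.ofReal (dist p.1 p.2 ^ 2) ∂γ

section StmtAux
open Set

lemma countable_generatePiSystem {α : Type*} {S : Set (Set α)} (hS : S.Countable) :
    Set.Countable (generatePiSystem S) := by
  have h1 : {F : Set (Set α) | F.Finite ∧ F ⊆ S}.Countable := Set.countable_setOf_finite_subset hS
  refine Set.Countable.mono ?_ (h1.image (fun F => ⋂₀ F))
  intro t ht
  induction ht with
  | base h => exact ⟨{_}, ⟨Set.finite_singleton _, by simpa using h⟩, by simp⟩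
  | inter hs ht hne ihs iht =>
      obtain ⟨F, ⟨hF, hFS⟩, rfl⟩ := ihs
      obtain ⟨G, ⟨hG, hGS⟩, rfl⟩ := iht
      exact ⟨F ∪ G, ⟨hF.union hG, Set.union_subset hFS hGS⟩, by simp [Set.sInter_union]⟩

lemma exists_countable_piSystem (α : Type*) [m : MeasurableSpace α]
    [MeasurableSpace.CountablyGenerated α] :
    ∃ S : Set (Set α), S.Countable ∧ IsPiSystem S ∧ m = MeasurableSpace.generateFrom S := by
  refine ⟨generatePiSystem (MeasurableSpace.countableGeneratingSet α),
    countable_generatePiSystem (MeasurableSpace.countable_countableGeneratingSet),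
    isPiSystem_generatePiSystem _, ?_⟩
  rw [generateFrom_generatePiSystem_eq, MeasurableSpace.generateFrom_countableGeneratingSet]

/-- a.e. uniqueness of disintegration kernels (one Markov, one s-finite). -/
lemma kernel_ae_eq_of_compProd_eq {α Ω : Type*} [MeasurableSpace α] [MeasurableSpace Ω]
    [MeasurableSpace.CountablyGenerated Ω]
    {μ : Measure α} [IsFiniteMeasure μ] {κ η : Kernel α Ω} [IsMarkovKernel κ] [IsSFiniteKernel η]
    (h : μ.compProd κ = μ.compProd η) :
    ∀ᵐ x ∂μ, κ x = η x := by
  obtain ⟨S, hScount, hSpi, hSgen⟩ := exists_countable_piSystem Ω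
  have hset : ∀ s : Set Ω, MeasurableSet s → ∀ᵐ x ∂μ, κ x s = η x s := by
    intro s hs
    refine ae_eq_of_forall_setLIntegral_eq_of_sigmaFinite
      (Kernel.measurable_coe κ hs) (Kernel.measurable_coe η hs) (fun t ht _ => ?_)
    rw [← Measure.compProd_apply_prod ht hs, ← Measure.compProd_apply_prod ht hs, h]
  have huniv : ∀ᵐ x ∂μ, κ x Set.univ = η x Set.univ := hset _ MeasurableSet.univ
  have hbasic : ∀ᵐ x ∂μ, ∀ s ∈ S, κ x s = η x s := by
    rw [MeasureTheory.ae_ball_iff hScount]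
    exact fun s hsS => hset s (hSgen ▸ MeasurableSpace.measurableSet_generateFrom hsS)
  have key : ∀ᵐ x ∂μ, ∀ ⦃s⦄, MeasurableSet s → κ x s = η x s := by
    refine MeasurableSpace.ae_induction_on_inter hSgen hSpi ?_ hbasic ?_ ?_
    · exact ae_of_all _ (by simp)
    · filter_upwards [huniv] with x hxu s hsmeas hseq
      have h1 : η x s ≠ ⊤ := by
        refine ne_of_lt (lt_of_le_of_lt (measure_mono (Set.subset_univ _)) ?_)
        rw [← hxu]; exact measure_lt_top _ _
      rw [measure_compl hsmeas (measure_ne_top _ _), measure_compl hsmeas h1, hxu, hseq]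
    · refine ae_of_all _ (fun x f hdisj hmeas heq => ?_)
      rw [measure_iUnion hdisj hmeas, measure_iUnion hdisj hmeas]
      exact tsum_congr heq
  filter_upwards [key] with x hx
  exact Measure.ext fun s hs => hx hs


lemma my_integral_llr_nonneg {Ω : Type*} [MeasurableSpace Ω] {ν lam : Measure Ω}
    [IsProbabilityMeasure ν] [IsProbabilityMeasure lam] (hν : ν ≪ lam)
    (hint : Integrable (fun z => Real.log ((ν.rnDeriv lam) z).toReal) ν) :
    0 ≤ ∫ z, Real.log ((ν.rnDeriv lam) z).toReal ∂ν := by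
  set ρ := ν.rnDeriv lam with hρ
  have hρm : Measurable ρ := Measure.measurable_rnDeriv ν lam
  have hpos : ∀ᵐ z ∂ν, 0 < ρ z := Measure.rnDeriv_pos hν
  have hfin : ∀ᵐ z ∂ν, ρ z < ⊤ := hν.ae_le (Measure.rnDeriv_lt_top ν lam)
  set g : Ω → ℝ := fun z => ((ρ z).toReal)⁻¹ with hg
  have hgm : Measurable g := (hρm.ennreal_toReal).inv
  have hg0 : ∀ z, 0 ≤ g z := fun z => inv_nonneg.2 ENNReal.toReal_nonneg
  have hlint : ∫⁻ z, ENNReal.ofReal (g z) ∂ν ≤ 1 := by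
    have hle : ∀ z, ENNReal.ofReal (g z) ≤ (ρ z)⁻¹ := by
      intro z
      rcases eq_or_ne (ρ z) ⊤ with h | h
      · simp [hg, h]
      rcases eq_or_ne (ρ z) 0 with h0 | h0
      · simp [hg, h0]
      · simp only [hg]; rw [← ENNReal.toReal_inv, ENNReal.ofReal_toReal (by simp [h0])]
    calc ∫⁻ z, ENNReal.ofReal (g z) ∂ν ≤ ∫⁻ z, (ρ z)⁻¹ ∂ν := lintegral_mono hle
      _ = ∫⁻ z, (ρ z)⁻¹ ∂(lam.withDensity ρ) := by
          rw [Measure.withDensity_rnDeriv_eq ν lam hν]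
      _ = ∫⁻ z, ρ z * (ρ z)⁻¹ ∂lam := by
          exact lintegral_withDensity_eq_lintegral_mul lam hρm (g := fun z => (ρ z)⁻¹) hρm.inv
      _ ≤ ∫⁻ _, 1 ∂lam := lintegral_mono (fun z => ENNReal.mul_inv_le_one _)
      _ = 1 := by simp
  have hgint : Integrable g ν := by
    refine ⟨hgm.aestronglyMeasurable, ?_⟩
    rw [hasFiniteIntegral_iff_ofReal (ae_of_all _ hg0)]
    exact lt_of_le_of_lt hlint ENNReal.one_lt_top
  have hgle : ∫ z, g z ∂ν ≤ 1 := by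
    have h1 : ENNReal.ofReal (∫ z, g z ∂ν) ≤ ENNReal.ofReal 1 := by
      rw [ofReal_integral_eq_lintegral_ofReal hgint (ae_of_all _ hg0)]
      simpa using hlint
    exact le_trans (ENNReal.ofReal_le_ofReal_iff zero_le_one |>.mp h1)
      le_rfl
  have hptwise : ∀ᵐ z ∂ν, 1 - g z ≤ Real.log ((ρ z).toReal) := by
    filter_upwards [hpos, hfin] with z h0 hf
    have ht : 0 < (ρ z).toReal := ENNReal.toReal_pos h0.ne' hf.ne
    have := Real.log_le_sub_one_of_pos (inv_pos.2 ht)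
    rw [Real.log_inv] at this
    simp only [hg]
    linarith
  have hmono : ∫ z, (1 - g z) ∂ν ≤ ∫ z, Real.log ((ρ z).toReal) ∂ν :=
    integral_mono_ae ((integrable_const (1:ℝ)).sub hgint) hint hptwise
  have : ∫ z, (1 - g z) ∂ν = 1 - ∫ z, g z ∂ν := by
    rw [integral_sub (integrable_const _) hgint]; simp
  rw [this] at hmono
  linarith


-- Cauchy-Schwarz for lintegral on a probability measure
lemma lintegral_le_sqrt_lintegral_sq {X : Type*} [MeasurableSpace X] {ν : Measure X}
    [IsProbabilityMeasure ν] {f : X → ℝ≥0∞} (hf : AEMeasurable f ν) :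
    ∫⁻ x, f x ∂ν ≤ (∫⁻ x, f x ^ (2:ℝ) ∂ν) ^ (1/2 : ℝ) := by
  have h := ENNReal.lintegral_mul_le_Lp_mul_Lq ν (Real.holderConjugate_iff_eq_conjExponent
    (by norm_num) |>.2 (by norm_num) : Real.HolderConjugate 2 2) hf aemeasurable_const (g := fun _ => 1)
  simpa using h

lemma enorm_integral_le_sqrt {X : Type*} [MeasurableSpace X] {ν : Measure X}
    [IsProbabilityMeasure ν] {f : X → ℝ} (hf : AEMeasurable f ν) :
    (‖∫ x, f x ∂ν‖₊ : ℝ≥0∞) ≤ (∫⁻ x, (‖f x‖₊ : ℝ≥0∞) ^ (2:ℝ) ∂ν) ^ (1/2 : ℝ) :=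
  le_trans (enorm_integral_le_lintegral_enorm _)
    (lintegral_le_sqrt_lintegral_sq (by fun_prop))

-- integrability of Lipschitz functions under second moment
lemma integrable_of_lipschitz {X : Type*} [MeasurableSpace X] [MetricSpace X] [BorelSpace X]
    {ν : Measure X} [IsProbabilityMeasure ν] {K : ℝ≥0} {f : X → ℝ} (hf : LipschitzWith K f)
    (o : X) (hmom : Integrable (fun z => dist z o) ν) : Integrable f ν := by
  have : ∀ z, ‖f z‖ ≤ ‖f o‖ + (K : ℝ) * dist z o := by
    intro z
    have := hf.dist_le_mul z o
    rw [Real.dist_eq] at this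
    calc ‖f z‖ ≤ ‖f o‖ + ‖f z - f o‖ := by
          rw [Real.norm_eq_abs, Real.norm_eq_abs, Real.norm_eq_abs]
          have := abs_sub_abs_le_abs_sub (f z) (f o); linarith [abs_nonneg (f z - f o)]
      _ ≤ ‖f o‖ + (K : ℝ) * dist z o := by simp only [Real.norm_eq_abs]; linarith
  exact Integrable.mono' ((integrable_const _).add (hmom.const_mul _))
    (hf.continuous.aestronglyMeasurable) (ae_of_all _ this)

lemma lipschitz_integral_diff_sq_le {X : Type*} [MeasurableSpace X] [MetricSpace X]
    [SecondCountableTopology X] [BorelSpace X]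
    {ν₁ ν₂ : Measure X} [IsProbabilityMeasure ν₁] [IsProbabilityMeasure ν₂] {K : ℝ≥0}
    {f : X → ℝ} (hf : LipschitzWith K f) (h1 : Integrable f ν₁) (h2 : Integrable f ν₂) :
    ENNReal.ofReal ((∫ x, f x ∂ν₁ - ∫ x, f x ∂ν₂) ^ 2)
      ≤ (K : ℝ≥0∞) ^ (2:ℝ) * W2sq ν₁ ν₂ := by
  set Δ : ℝ := ∫ x, f x ∂ν₁ - ∫ x, f x ∂ν₂ with hΔ
  rcases eq_or_ne K 0 with hK | hK
  · have : ∀ z w : X, f z = f w := by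
      intro z w
      have := hf.dist_le_mul z w
      rw [hK] at this
      simpa [dist_le_zero] using this
    rcases isEmpty_or_nonempty X with hX | hX
    · have : ν₁ = ν₂ := Subsingleton.elim _ _
      simp [hΔ, this]
    · obtain ⟨o⟩ := hX
      have h1' : ∫ x, f x ∂ν₁ = f o := by
        rw [show f = fun _ => f o from funext fun z => this z o]; simp
      have h2' : ∫ x, f x ∂ν₂ = f o := by
        rw [show f = fun _ => f o from funext fun z => this z o]; simp
      simp [hΔ, h1', h2']
  · have hK2 : ((K : ℝ≥0∞) ^ (2:ℝ)) ≠ 0 := by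
      simp [ENNReal.rpow_eq_zero_iff, hK]
    have hK2' : ((K : ℝ≥0∞) ^ (2:ℝ)) ≠ ⊤ := by
      refine ENNReal.rpow_ne_top_of_nonneg (by norm_num) (by simp)
    have step1 : ∀ γ : Measure (X × X), γ.fst = ν₁ → γ.snd = ν₂ →
        ENNReal.ofReal (Δ ^ 2) ≤ (K : ℝ≥0∞) ^ (2:ℝ) *
          ∫⁻ p, ENNReal.ofReal (dist p.1 p.2 ^ 2) ∂γ := by
      intro γ hγ1 hγ2
      haveI : IsProbabilityMeasure γ := by
        constructor
        rw [← Set.preimage_univ (f := Prod.fst), ← Measure.fst_apply MeasurableSet.univ, hγ1]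
        exact measure_univ
      have hint1 : Integrable (fun p : X × X => f p.1) γ := by
        rw [← hγ1] at h1
        exact (integrable_map_measure hf.continuous.aestronglyMeasurable
          measurable_fst.aemeasurable).mp h1
      have hint2 : Integrable (fun p : X × X => f p.2) γ := by
        rw [← hγ2] at h2
        exact (integrable_map_measure hf.continuous.aestronglyMeasurable
          measurable_snd.aemeasurable).mp h2
      have hΔγ : Δ = ∫ p, (f p.1 - f p.2) ∂γ := by
        rw [integral_sub hint1 hint2, hΔ, ← hγ1, ← hγ2, Measure.fst, Measure.snd,
          integral_map measurable_fst.aemeasurable hf.continuous.aestronglyMeasurable,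
          integral_map measurable_snd.aemeasurable hf.continuous.aestronglyMeasurable]
      have hnorm : (‖Δ‖₊ : ℝ≥0∞) ≤ (K : ℝ≥0∞) *
          (∫⁻ p, ENNReal.ofReal (dist p.1 p.2 ^ 2) ∂γ) ^ (1/2 : ℝ) := by
        rw [hΔγ]
        refine le_trans (enorm_integral_le_lintegral_enorm _) ?_
        have hpt : ∀ p : X × X, (‖f p.1 - f p.2‖₊ : ℝ≥0∞) ≤ (K : ℝ≥0∞) * edist p.1 p.2 := by
          intro p
          rw [← enorm_eq_nnnorm, ← edist_eq_enorm_sub]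
          exact hf (p.1) (p.2)
        calc ∫⁻ p, (‖f p.1 - f p.2‖₊ : ℝ≥0∞) ∂γ
            ≤ ∫⁻ p, (K : ℝ≥0∞) * edist p.1 p.2 ∂γ := lintegral_mono hpt
          _ = (K : ℝ≥0∞) * ∫⁻ p, edist p.1 p.2 ∂γ := lintegral_const_mul _
              (measurable_fst.edist measurable_snd)
          _ ≤ (K : ℝ≥0∞) * (∫⁻ p, edist p.1 p.2 ^ (2:ℝ) ∂γ) ^ (1/2:ℝ) :=
              mul_le_mul_right (lintegral_le_sqrt_lintegral_sq
                (measurable_fst.edist measurable_snd).aemeasurable) _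
          _ = (K : ℝ≥0∞) * (∫⁻ p, ENNReal.ofReal (dist p.1 p.2 ^ 2) ∂γ) ^ (1/2:ℝ) := by
              congr 1
              refine congrArg (· ^ (1/2:ℝ)) (lintegral_congr fun p => ?_)
              rw [edist_dist, ENNReal.ofReal_rpow_of_nonneg dist_nonneg (by norm_num)]
              congr 1
              rw [show ((2:ℝ)) = ((2:ℕ):ℝ) by norm_num, Real.rpow_natCast]
      calc ENNReal.ofReal (Δ ^ 2) = ((‖Δ‖₊ : ℝ≥0∞)) ^ (2:ℝ) := by
            rw [← enorm_eq_nnnorm, ← ofReal_norm_eq_enorm, ENNReal.ofReal_rpow_of_nonneg (norm_nonneg _) (by norm_num)]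
            congr 1
            rw [Real.norm_eq_abs, show ((2:ℝ)) = ((2:ℕ):ℝ) by norm_num, Real.rpow_natCast, sq_abs]
        _ ≤ ((K : ℝ≥0∞) * (∫⁻ p, ENNReal.ofReal (dist p.1 p.2 ^ 2) ∂γ) ^ (1/2:ℝ)) ^ (2:ℝ) :=
            ENNReal.rpow_le_rpow hnorm (by norm_num)
        _ = (K : ℝ≥0∞) ^ (2:ℝ) * ∫⁻ p, ENNReal.ofReal (dist p.1 p.2 ^ 2) ∂γ := by
            rw [ENNReal.mul_rpow_of_nonneg _ _ (by norm_num), ← ENNReal.rpow_mul]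
            norm_num
    have hdiv : ENNReal.ofReal (Δ ^ 2) / ((K : ℝ≥0∞) ^ (2:ℝ)) ≤ W2sq ν₁ ν₂ := by
      refine le_iInf₂ fun γ hγ => ?_
      rw [ENNReal.div_le_iff_le_mul (Or.inl hK2) (Or.inl hK2'), mul_comm]
      exact step1 γ hγ.1 hγ.2
    rw [ENNReal.div_le_iff_le_mul (Or.inl hK2) (Or.inl hK2'), mul_comm] at hdiv
    exact hdiv


lemma lintegral_le_sqrt_lintegral_sq' {X : Type*} [MeasurableSpace X] {ν : Measure X}
    [IsProbabilityMeasure ν] {f : X → ℝ≥0∞} (hf : AEMeasurable f ν) :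
    ∫⁻ x, f x ∂ν ≤ (∫⁻ x, f x ^ (2:ℝ) ∂ν) ^ (1/2 : ℝ) := by
  have h := ENNReal.lintegral_mul_le_Lp_mul_Lq ν (Real.holderConjugate_iff_eq_conjExponent
    (by norm_num) |>.2 (by norm_num) : Real.HolderConjugate 2 2) hf aemeasurable_const (g := fun _ => 1)
  simpa using h

lemma eLpNorm_kernel_integral_le {E : Type*} [MeasurableSpace E]
    {μ : Measure E} [SFinite μ] {κ : Kernel E E} [IsMarkovKernel κ]
    (hsnd : (μ.compProd κ).snd = μ) {f : E → ℝ} (hm : Measurable f) :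
    eLpNorm (fun x => ∫ z, f z ∂κ x) 2 μ ≤ eLpNorm f 2 μ := by
  rw [eLpNorm_eq_lintegral_rpow_enorm_toReal (by norm_num) (by norm_num),
    eLpNorm_eq_lintegral_rpow_enorm_toReal (by norm_num) (by norm_num)]
  simp only [ENNReal.toReal_ofNat]
  refine ENNReal.rpow_le_rpow ?_ (by norm_num)
  calc ∫⁻ x, (‖∫ z, f z ∂κ x‖₊ : ℝ≥0∞) ^ (2:ℝ) ∂μ
      ≤ ∫⁻ x, ∫⁻ z, (‖f z‖₊ : ℝ≥0∞) ^ (2:ℝ) ∂κ x ∂μ := by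
        refine lintegral_mono fun x => ?_
        have h1 : (‖∫ z, f z ∂κ x‖₊ : ℝ≥0∞) ≤ (∫⁻ z, (‖f z‖₊ : ℝ≥0∞) ^ (2:ℝ) ∂κ x) ^ (1/2:ℝ) :=
          le_trans (enorm_integral_le_lintegral_enorm _)
            (lintegral_le_sqrt_lintegral_sq' (by fun_prop))
        calc (‖∫ z, f z ∂κ x‖₊ : ℝ≥0∞) ^ (2:ℝ)
            ≤ ((∫⁻ z, (‖f z‖₊ : ℝ≥0∞) ^ (2:ℝ) ∂κ x) ^ (1/2:ℝ)) ^ (2:ℝ) :=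
              ENNReal.rpow_le_rpow h1 (by norm_num)
          _ = ∫⁻ z, (‖f z‖₊ : ℝ≥0∞) ^ (2:ℝ) ∂κ x := by
              rw [← ENNReal.rpow_mul]; norm_num
    _ = ∫⁻ p : E × E, (‖f p.2‖₊ : ℝ≥0∞) ^ (2:ℝ) ∂(μ.compProd κ) := by
        rw [Measure.lintegral_compProd (by fun_prop)]
    _ = ∫⁻ z, (‖f z‖₊ : ℝ≥0∞) ^ (2:ℝ) ∂((μ.compProd κ).snd) := by
        rw [Measure.snd, lintegral_map (by fun_prop) measurable_snd]
    _ = ∫⁻ z, (‖f z‖₊ : ℝ≥0∞) ^ (2:ℝ) ∂μ := by rw [hsnd]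

lemma entropy_disintegration {E : Type*} [MeasurableSpace E]
    [MeasurableSpace.CountablyGenerated E]
    {μ : Measure E} [IsProbabilityMeasure μ] {κa κb : Kernel E E}
    [IsMarkovKernel κa] [IsMarkovKernel κb]
    (hac : μ.compProd κa ≪ μ.compProd κb)
    (hint : Integrable (fun p => Real.log
      (((μ.compProd κa).rnDeriv (μ.compProd κb)) p).toReal) (μ.compProd κa)) :
    ∃ H : E → ℝ, Integrable H μ ∧
      ∫ x, H x ∂μ = ∫ p, Real.log
        (((μ.compProd κa).rnDeriv (μ.compProd κb)) p).toReal ∂(μ.compProd κa) ∧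
      (∀ᵐ x ∂μ, 0 ≤ H x ∧ relEnt (κa x) (κb x) = ((H x : ℝ) : EReal)) := by
  set ν := μ.compProd κa with hν
  set lam := μ.compProd κb with hlam
  set ρ0 := ν.rnDeriv lam with hρ0
  have hρ0m : Measurable ρ0 := Measure.measurable_rnDeriv ν lam
  set ρ : E × E → ℝ≥0∞ := fun p => ((ρ0 p).toNNReal : ℝ≥0∞) with hρdef
  have hρm : Measurable ρ := hρ0m.ennreal_toNNReal.coe_nnreal_ennreal
  have hρ_ne_top : ∀ p, ρ p ≠ ⊤ := fun p => ENNReal.coe_ne_top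
  have hρ_toReal : ∀ p, (ρ p).toReal = (ρ0 p).toReal := fun p => by
    simp [hρdef, ENNReal.toReal, ENNReal.toNNReal_coe]
  have hρ_ae : ρ =ᵐ[lam] ρ0 := by
    filter_upwards [Measure.rnDeriv_lt_top ν lam] with p hp
    exact ENNReal.coe_toNNReal hp.ne
  have h1 : lam.withDensity ρ = ν := by
    rw [MeasureTheory.withDensity_congr_ae hρ_ae]
    exact Measure.withDensity_rnDeriv_eq _ _ hac
  set f : E → E → ℝ≥0∞ := fun x y => ρ (x, y) with hfdef
  have hfu : Measurable (Function.uncurry f) := by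
    have : Function.uncurry f = ρ := funext fun p => by simp [Function.uncurry, hfdef]
    rw [this]; exact hρm
  set κb' : Kernel E E := Kernel.withDensity κb f with hκb'
  haveI : IsSFiniteKernel κb' :=
    Kernel.IsSFiniteKernel.withDensity κb (fun a b => hρ_ne_top _)
  have h2 : μ.compProd κb' = lam.withDensity ρ := by
    ext s hs
    rw [Measure.compProd_apply hs, withDensity_apply _ hs, hlam,
      ← lintegral_indicator hs, Measure.lintegral_compProd (hρm.indicator hs)]
    refine lintegral_congr fun x => ?_
    rw [hκb', Kernel.withDensity_apply κb hfu,
      withDensity_apply _ (measurable_prodMk_left hs), ← lintegral_indicator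
      (measurable_prodMk_left hs)]
    refine lintegral_congr fun y => ?_
    by_cases hxy : (x, y) ∈ s
    · simp [hxy, Set.indicator_of_mem, hfdef]
    · have : y ∉ Prod.mk x ⁻¹' s := hxy
      simp [Set.indicator_of_notMem, hxy, this]
  have h3 : μ.compProd κa = μ.compProd κb' := by rw [h2, h1]
  have h4 : ∀ᵐ x ∂μ, κa x = κb' x := kernel_ae_eq_of_compProd_eq h3
  have hwd : ∀ᵐ x ∂μ, κa x = (κb x).withDensity (f x) := by
    filter_upwards [h4] with x hx
    rw [hx, hκb', Kernel.withDensity_apply κb hfu]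
  -- the log integrand
  set G : E × E → ℝ := fun p => Real.log ((ρ0 p).toReal) with hG
  have hGm : Measurable G := (hρ0m.ennreal_toReal).log
  have hint' : Integrable G ν := hint
  have hcomp := (Measure.integrable_compProd_iff (f := G) (μ := μ) (κ := κa)
    hGm.aestronglyMeasurable).mp hint'
  obtain ⟨hxint, hnint⟩ := hcomp
  set H : E → ℝ := fun x => ∫ y, G (x, y) ∂κa x with hH
  have hHsm : StronglyMeasurable H :=
    hGm.stronglyMeasurable.integral_kernel_prod_right'
  have hHint : Integrable H μ := by
    refine Integrable.mono' hnint hHsm.aestronglyMeasurable ?_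
    refine ae_of_all _ fun x => ?_
    exact norm_integral_le_integral_norm _
  have hHeq : ∫ x, H x ∂μ = ∫ p, G p ∂ν := by
    rw [hν, Measure.integral_compProd hint']
  refine ⟨H, hHint, hHeq, ?_⟩
  have hmom_ae : ∀ᵐ x ∂μ, Integrable (fun y => G (x, y)) (κa x) := hxint
  filter_upwards [hwd, hmom_ae] with x hx hxi
  have hacx : κa x ≪ κb x := by rw [hx]; exact withDensity_absolutelyContinuous _ _
  have hrnx : (κa x).rnDeriv (κb x) =ᵐ[κb x] f x := by
    rw [hx]; exact Measure.rnDeriv_withDensity (κb x) (hfu.comp measurable_prodMk_left)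
  have hrnx' : (κa x).rnDeriv (κb x) =ᵐ[κa x] f x := hacx.ae_le hrnx
  have hlog_eq : (fun y => Real.log (((κa x).rnDeriv (κb x)) y).toReal)
      =ᵐ[κa x] fun y => G (x, y) := by
    filter_upwards [hrnx'] with y hy
    rw [hy, hfdef]
    simp only [hG, hρ_toReal]
  have hintx : Integrable (fun y => Real.log (((κa x).rnDeriv (κb x)) y).toReal) (κa x) :=
    hxi.congr hlog_eq.symm
  have hrel : relEnt (κa x) (κb x)
      = ((∫ y, Real.log (((κa x).rnDeriv (κb x)) y).toReal ∂κa x : ℝ) : EReal) := by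
    rw [relEnt, if_pos ⟨hacx, hintx⟩]
  have hval : ∫ y, Real.log (((κa x).rnDeriv (κb x)) y).toReal ∂κa x = H x :=
    integral_congr_ae hlog_eq
  refine ⟨?_, by rw [hrel, hval]⟩
  rw [← hval]
  exact my_integral_llr_nonneg hacx hintx

lemma enorm_sq_eq (r : ℝ) : ((‖r‖₊ : ℝ≥0∞)) ^ (2:ℝ) = ENNReal.ofReal (r ^ 2) := by
  rw [← enorm_eq_nnnorm, ← ofReal_norm_eq_enorm, ENNReal.ofReal_rpow_of_nonneg (norm_nonneg _) (by norm_num)]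
  congr 1
  rw [Real.norm_eq_abs, show ((2:ℝ)) = ((2:ℕ):ℝ) by norm_num, Real.rpow_natCast, sq_abs]

lemma coe_nnreal_rpow_two_eq (K : ℝ≥0) :
    ((K : ℝ≥0∞)) ^ (2:ℝ) = ENNReal.ofReal ((K : ℝ) ^ 2) := by
  rw [← ENNReal.ofReal_coe_nnreal, ENNReal.ofReal_rpow_of_nonneg K.coe_nonneg (by norm_num)]
  congr 1
  rw [show ((2:ℝ)) = ((2:ℕ):ℝ) by norm_num, Real.rpow_natCast]

lemma per_kernel_facts {E : Type*} [MeasurableSpace E] [MetricSpace E]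
    [SecondCountableTopology E] [BorelSpace E]
    (μ : Measure E) [IsProbabilityMeasure μ] (κ : Kernel E E) [IsMarkovKernel κ]
    (hsnd : (μ.compProd κ).snd = μ) (o : E) (hmom : Integrable (fun x => dist x o ^ 2) μ)
    {ξ ξ' : E → ℝ} (hξ'sm : StronglyMeasurable ξ') (hae : ξ =ᵐ[μ] ξ')
    (hξ'int : Integrable ξ' μ) :
    ∀ᵐ x ∂μ, Integrable ξ' (κ x) ∧ Integrable (fun z => dist z o) (κ x) ∧
      ∫ z, ξ z ∂κ x = ∫ z, ξ' z ∂κ x := by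
  have hpush : ∀ (g : E → ℝ), StronglyMeasurable g → Integrable g μ →
      ∀ᵐ x ∂μ, Integrable g (κ x) := by
    intro g hgsm hgint
    have h1 : Integrable g ((μ.compProd κ).snd) := by rw [hsnd]; exact hgint
    have h2 : Integrable (fun p : E × E => g p.2) (μ.compProd κ) := by
      rw [Measure.snd] at h1
      exact (integrable_map_measure hgsm.aestronglyMeasurable
        measurable_snd.aemeasurable).mp h1
    exact ((Measure.integrable_compProd_iff
      ((hgsm.comp_measurable measurable_snd).aestronglyMeasurable)).mp h2).1
  have hd2 : ∀ᵐ x ∂μ, Integrable (fun z => dist z o ^ 2) (κ x) :=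
    hpush _ ((measurable_dist.comp (measurable_id.prodMk measurable_const)).pow_const 2
      |>.stronglyMeasurable) hmom
  have hdist : ∀ᵐ x ∂μ, Integrable (fun z => dist z o) (κ x) := by
    filter_upwards [hd2] with x hx
    refine Integrable.mono' ((integrable_const (1:ℝ)).add hx)
      ((measurable_dist.comp (measurable_id.prodMk measurable_const)).aestronglyMeasurable)
      (ae_of_all _ fun z => ?_)
    simp only [Pi.add_apply]
    rw [Real.norm_eq_abs, abs_of_nonneg dist_nonneg]
    nlinarith [dist_nonneg (x := z) (y := o)]
  have hxi : ∀ᵐ x ∂μ, Integrable ξ' (κ x) := hpush _ hξ'sm hξ'int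
  have heq : ∀ᵐ x ∂μ, ∫ z, ξ z ∂κ x = ∫ z, ξ' z ∂κ x := by
    set N := toMeasurable μ {x | ξ x ≠ ξ' x} with hN
    have hNnull : μ N = 0 := by
      rw [hN, measure_toMeasurable]
      exact ae_iff.mp hae
    have hNmeas : MeasurableSet N := measurableSet_toMeasurable _ _
    have hprodnull : (μ.compProd κ) {p : E × E | ξ p.2 ≠ ξ' p.2} = 0 := by
      refine measure_mono_null (t := Prod.snd ⁻¹' N) (fun p hp => ?_) ?_
      · exact Set.mem_preimage.mpr (subset_toMeasurable _ _ hp : p.2 ∈ N)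
      · have h5 : (μ.compProd κ) (Prod.snd ⁻¹' N) = ((μ.compProd κ).snd) N :=
          (Measure.snd_apply hNmeas).symm
        rw [h5, hsnd, hNnull]
    have hjoint : ∀ᵐ p : E × E ∂(μ.compProd κ), ξ p.2 = ξ' p.2 := by
      rw [ae_iff]
      exact hprodnull
    have := Measure.ae_ae_of_ae_compProd hjoint
    filter_upwards [this] with x hx
    exact integral_congr_ae hx
  filter_upwards [hxi, hdist, heq] with x h1 h2 h3
  exact ⟨h1, h2, h3⟩

end StmtAux

/-- Generator transfer for limits of Lipschitz functions: if the couplings `α^ε` approximate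
the couplings `β^ε` at rate `o(ε²)` in relative entropy, the disintegrations of `β^ε` satisfy
Talagrand inequalities with constants `c(ε)` with `limsup c(ε)/ε < ∞`, `ξ_ε` are Lipschitz
with `sup √ε·Lip(ξ_ε) < ∞` and `ε⁻¹‖ξ_ε − ξ‖_{L²(μ)} → 0`, and
`ε⁻¹(∫ ξ dβ^ε_x − ξ(x)) → L` in `L²(μ)`, then also `ε⁻¹(∫ ξ dα^ε_x − ξ(x)) → L` in
`L²(μ)`. -/
theorem stmt4 {E : Type*} [MetricSpace E] [CompleteSpace E]
    [TopologicalSpace.SeparableSpace E] [MeasurableSpace E] [BorelSpace E]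
    (μ : Measure E) [IsProbabilityMeasure μ]
    (o : E) (hmom : Integrable (fun x => dist x o ^ 2) μ)
    (ε₀ : ℝ) (hε₀ : 0 < ε₀)
    (α β : ℝ → Measure (E × E)) (κα κβ : ℝ → Kernel E E)
    (hcoup : ∀ ε ∈ Set.Ioo (0:ℝ) ε₀,
      IsMarkovKernel (κα ε) ∧ α ε = μ.compProd (κα ε) ∧ (α ε).snd = μ ∧
      IsMarkovKernel (κβ ε) ∧ β ε = μ.compProd (κβ ε) ∧ (β ε).snd = μ)
    (c : ℝ → ℝ) (hcpos : ∀ ε ∈ Set.Ioo (0:ℝ) ε₀, 0 < c ε)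
    (hclim : ∃ B : ℝ, ∀ᶠ ε in 𝓝[>] (0:ℝ), c ε / ε ≤ B)
    (hTal : ∀ ε ∈ Set.Ioo (0:ℝ) ε₀, ∀ᵐ x ∂μ, ∀ η : Measure E, IsProbabilityMeasure η →
      ((W2sq η ((κβ ε) x) : ℝ≥0∞) : EReal) ≤ ((c ε : ℝ) : EReal) * relEnt η ((κβ ε) x))
    (hH : ∀ δ > (0:ℝ), ∀ᶠ ε in 𝓝[>] (0:ℝ),
      relEnt (α ε) (β ε) ≤ ((δ * ε ^ 2 : ℝ) : EReal))
    (K : ℝ → ℝ≥0) (ξε : ℝ → E → ℝ)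
    (hLip : ∀ ε ∈ Set.Ioo (0:ℝ) ε₀, LipschitzWith (K ε) (ξε ε))
    (hsup : ∃ B : ℝ, ∀ ε ∈ Set.Ioo (0:ℝ) ε₀, Real.sqrt ε * (K ε : ℝ) ≤ B)
    (ξ : E → ℝ) (hξ : MemLp ξ 2 μ)
    (happrox : Tendsto (fun ε => eLpNorm (fun x => ξε ε x - ξ x) 2 μ / ENNReal.ofReal ε)
      (𝓝[>] (0:ℝ)) (𝓝 0))
    (L : E → ℝ) (hL : MemLp L 2 μ)
    (hβgen : Tendsto
      (fun ε => eLpNorm (fun x => ((∫ z, ξ z ∂((κβ ε) x)) - ξ x) / ε - L x) 2 μ)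
      (𝓝[>] (0:ℝ)) (𝓝 0)) :
    Tendsto
      (fun ε => eLpNorm (fun x => ((∫ z, ξ z ∂((κα ε) x)) - ξ x) / ε - L x) 2 μ)
      (𝓝[>] (0:ℝ)) (𝓝 0) := by
  obtain ⟨B₁, hB₁⟩ := hclim
  obtain ⟨B₂, hB₂⟩ := hsup
  set B1' : ℝ := max B₁ 1 with hB1'def
  set B2' : ℝ := max B₂ 1 with hB2'def
  have hB1'pos : 0 < B1' := lt_of_lt_of_le one_pos (le_max_right _ _)
  have hB2'pos : 0 < B2' := lt_of_lt_of_le one_pos (le_max_right _ _)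
  set ξ' : E → ℝ := (hξ.1).mk ξ with hξ'def
  have hξ'sm : StronglyMeasurable ξ' := (hξ.1).stronglyMeasurable_mk
  have hξae : ξ =ᵐ[μ] ξ' := (hξ.1).ae_eq_mk
  have hξ'int : Integrable ξ' μ := ((hξ.ae_eq hξae).integrable (by norm_num))
  rw [ENNReal.tendsto_nhds_zero]
  intro θ hθ
  obtain ⟨t, ht0, htθ⟩ : ∃ t : ℝ, 0 < t ∧ ENNReal.ofReal t ≤ θ / 4 := by
    rcases eq_or_ne θ ⊤ with h | h
    · exact ⟨1, one_pos, by rw [h, ENNReal.top_div_of_lt_top (by norm_num)]; exact le_top⟩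
    · refine ⟨min 1 ((θ/4).toReal), lt_min one_pos (ENNReal.toReal_pos
        (by simp [hθ.ne']) (by simp [ENNReal.div_eq_top, h])), ?_⟩
      calc ENNReal.ofReal (min 1 ((θ/4).toReal)) ≤ ENNReal.ofReal ((θ/4).toReal) :=
            ENNReal.ofReal_le_ofReal (min_le_right _ _)
        _ = θ/4 := ENNReal.ofReal_toReal (by simp [ENNReal.div_eq_top, h])
  set δ : ℝ := t^2 / (B2'^2 * B1') with hδdef
  have hδpos : 0 < δ := by positivity
  have hδkey : B2'^2 * B1' * δ = t^2 := by
    rw [hδdef]; field_simp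
  have hIoo : ∀ᶠ ε in 𝓝[>] (0:ℝ), ε ∈ Set.Ioo 0 ε₀ :=
    Ioo_mem_nhdsGT_of_mem ⟨le_refl 0, hε₀⟩
  have hHe := hH δ hδpos
  have hξaE := ENNReal.tendsto_nhds_zero.mp happrox (θ/8)
    (ENNReal.div_pos hθ.ne' (by norm_num))
  have hβE := ENNReal.tendsto_nhds_zero.mp hβgen (θ/4)
    (ENNReal.div_pos hθ.ne' (by norm_num))
  filter_upwards [hIoo, hHe, hB₁, hξaE, hβE] with ε hε hHε hcε hξaε hβε
  obtain ⟨hMa, hαeq, hαsnd, hMb, hβeq, hβsnd⟩ := hcoup ε hε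
  haveI := hMa; haveI := hMb
  have hεpos : 0 < ε := hε.1
  have hεne : ε ≠ 0 := ne_of_gt hεpos
  have hKε := hLip ε hε
  have hcposε := hcpos ε hε
  have hsndα : (μ.compProd (κα ε)).snd = μ := by rw [← hαeq]; exact hαsnd
  have hsndβ : (μ.compProd (κβ ε)).snd = μ := by rw [← hβeq]; exact hβsnd
  -- joint entropy data
  have hcond : (α ε ≪ β ε) ∧
      Integrable (fun p => Real.log (((α ε).rnDeriv (β ε)) p).toReal) (α ε) := by
    by_contra hcon
    rw [relEnt, if_neg hcon] at hHε
    exact (EReal.coe_ne_top _) (top_le_iff.mp hHε)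
  obtain ⟨hacJ, hintJ⟩ := hcond
  have hHε' : ∫ p, Real.log (((α ε).rnDeriv (β ε)) p).toReal ∂(α ε) ≤ δ * ε^2 := by
    rw [relEnt, if_pos ⟨hacJ, hintJ⟩] at hHε
    exact EReal.coe_le_coe_iff.mp hHε
  rw [hαeq, hβeq] at hacJ hintJ hHε'
  obtain ⟨H, hHint, hHeq, hHae⟩ := entropy_disintegration hacJ hintJ
  have hHle : ∫ x, H x ∂μ ≤ δ * ε^2 := by rw [hHeq]; exact hHε'
  have hH0 : ∀ᵐ x ∂μ, 0 ≤ H x := hHae.mono fun x hx => hx.1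
  -- per-kernel facts
  have hfactα := per_kernel_facts μ (κα ε) hsndα o hmom hξ'sm hξae hξ'int
  have hfactβ := per_kernel_facts μ (κβ ε) hsndβ o hmom hξ'sm hξae hξ'int
  have hTalε := hTal ε hε
  set ξe : E → ℝ := ξε ε with hξedef
  have hξesm : StronglyMeasurable ξe := hKε.continuous.stronglyMeasurable
  set Δ : E → ℝ := fun x => (∫ z, ξe z ∂(κα ε) x) - ∫ z, ξe z ∂(κβ ε) x with hΔdef
  have hΔsm : StronglyMeasurable Δ :=
    ((hξesm.comp_measurable measurable_snd).integral_kernel_prod_right').sub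
      ((hξesm.comp_measurable measurable_snd).integral_kernel_prod_right')
  -- a.e. bound on Δ
  have hΔbound : ∀ᵐ x ∂μ, (‖Δ x‖₊ : ℝ≥0∞) ^ (2:ℝ) ≤
      ((K ε : ℝ≥0∞)) ^ (2:ℝ) * (ENNReal.ofReal (c ε) * ENNReal.ofReal (H x)) := by
    filter_upwards [hfactα, hfactβ, hTalε, hHae] with x hfa hfb htal hHx
    obtain ⟨hξ'iα, hdiα, heqα⟩ := hfa
    obtain ⟨hξ'iβ, hdiβ, heqβ⟩ := hfb
    obtain ⟨hH0x, hHrel⟩ := hHx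
    have hξeiα : Integrable ξe ((κα ε) x) := integrable_of_lipschitz hKε o hdiα
    have hξeiβ : Integrable ξe ((κβ ε) x) := integrable_of_lipschitz hKε o hdiβ
    have h1 : ENNReal.ofReal ((Δ x)^2) ≤ (K ε : ℝ≥0∞) ^ (2:ℝ) * W2sq ((κα ε) x) ((κβ ε) x) :=
      lipschitz_integral_diff_sq_le hKε hξeiα hξeiβ
    have h2 : W2sq ((κα ε) x) ((κβ ε) x) ≤ ENNReal.ofReal (c ε * H x) := by
      have h3 := htal ((κα ε) x) inferInstance
      rw [hHrel, ← EReal.coe_mul] at h3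
      have h4 : ((W2sq ((κα ε) x) ((κβ ε) x) : ℝ≥0∞) : EReal)
          ≤ ((ENNReal.ofReal (c ε * H x) : ℝ≥0∞) : EReal) := by
        rw [EReal.coe_ennreal_ofReal]
        exact le_trans h3 (EReal.coe_le_coe_iff.mpr (le_max_left _ _))
      exact EReal.coe_ennreal_le_coe_ennreal_iff.mp h4
    rw [enorm_sq_eq]
    calc ENNReal.ofReal ((Δ x)^2)
        ≤ (K ε : ℝ≥0∞) ^ (2:ℝ) * W2sq ((κα ε) x) ((κβ ε) x) := h1
      _ ≤ (K ε : ℝ≥0∞) ^ (2:ℝ) * ENNReal.ofReal (c ε * H x) := mul_le_mul_right h2 _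
      _ = (K ε : ℝ≥0∞) ^ (2:ℝ) * (ENNReal.ofReal (c ε) * ENNReal.ofReal (H x)) := by
          rw [ENNReal.ofReal_mul (le_of_lt hcposε)]
  -- L² bound on Δ
  have hΔe : eLpNorm Δ 2 μ ≤
      ((K ε : ℝ≥0∞) ^ (2:ℝ) * (ENNReal.ofReal (c ε) * ENNReal.ofReal (δ * ε^2))) ^ (1/2:ℝ) := by
    rw [eLpNorm_eq_lintegral_rpow_enorm_toReal (by norm_num) (by norm_num)]
    simp only [ENNReal.toReal_ofNat]
    refine ENNReal.rpow_le_rpow ?_ (by norm_num)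
    calc ∫⁻ x, (‖Δ x‖₊ : ℝ≥0∞) ^ (2:ℝ) ∂μ
        ≤ ∫⁻ x, ((K ε : ℝ≥0∞)) ^ (2:ℝ) * ENNReal.ofReal (c ε) * ENNReal.ofReal (H x) ∂μ := by
          refine lintegral_mono_ae (hΔbound.mono fun x hx => ?_)
          rw [mul_assoc]
          exact hx
      _ = ((K ε : ℝ≥0∞)) ^ (2:ℝ) * ENNReal.ofReal (c ε) * ∫⁻ x, ENNReal.ofReal (H x) ∂μ :=
          lintegral_const_mul'' _ (hHint.1.aemeasurable.ennreal_ofReal)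
      _ = ((K ε : ℝ≥0∞)) ^ (2:ℝ) * ENNReal.ofReal (c ε) * ENNReal.ofReal (∫ x, H x ∂μ) := by
          rw [ofReal_integral_eq_lintegral_ofReal hHint hH0]
      _ ≤ ((K ε : ℝ≥0∞)) ^ (2:ℝ) * ENNReal.ofReal (c ε) * ENNReal.ofReal (δ * ε^2) := by
          exact mul_le_mul_right (ENNReal.ofReal_le_ofReal hHle) _
      _ = ((K ε : ℝ≥0∞)) ^ (2:ℝ) * (ENNReal.ofReal (c ε) * ENNReal.ofReal (δ * ε^2)) := by
          rw [mul_assoc]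
  -- numeric bound
  have hKle : (K ε : ℝ) ^ 2 ≤ B2'^2 / ε := by
    have hs : 0 < Real.sqrt ε := Real.sqrt_pos.mpr hεpos
    have hK1 : (K ε : ℝ) ≤ B2' / Real.sqrt ε := by
      rw [le_div_iff₀ hs]
      calc (K ε : ℝ) * Real.sqrt ε = Real.sqrt ε * (K ε : ℝ) := mul_comm _ _
        _ ≤ B₂ := hB₂ ε hε
        _ ≤ B2' := le_max_left _ _
    calc (K ε : ℝ)^2 ≤ (B2' / Real.sqrt ε)^2 := by
          exact pow_le_pow_left₀ (K ε).coe_nonneg hK1 2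
      _ = B2'^2 / ε := by rw [div_pow, Real.sq_sqrt hεpos.le]
  have hcle : c ε ≤ B1' * ε := by
    rw [div_le_iff₀ hεpos] at hcε
    calc c ε ≤ B₁ * ε := hcε
      _ ≤ B1' * ε := mul_le_mul_of_nonneg_right (le_max_left _ _) hεpos.le
  have hfinal_real : (K ε : ℝ)^2 * (c ε * (δ * ε^2)) ≤ (t * ε)^2 := by
    have h1 : (K ε : ℝ)^2 * (c ε * (δ * ε^2)) ≤ (B2'^2/ε) * ((B1' * ε) * (δ * ε^2)) := by
      refine mul_le_mul hKle ?_ (by positivity) (by positivity)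
      exact mul_le_mul_of_nonneg_right hcle (by positivity)
    refine le_trans h1 (le_of_eq ?_)
    have : B2'^2/ε * ((B1' * ε) * (δ * ε^2)) = (B2'^2 * B1' * δ) * ε^2 := by
      field_simp
    rw [this, hδkey]; ring
  have hΔe2 : eLpNorm Δ 2 μ ≤ ENNReal.ofReal (t * ε) := by
    refine le_trans hΔe ?_
    rw [coe_nnreal_rpow_two_eq, ← ENNReal.ofReal_mul (by positivity),
      ← ENNReal.ofReal_mul (by positivity),
      ENNReal.ofReal_rpow_of_nonneg (by positivity) (by norm_num)]
    refine ENNReal.ofReal_le_ofReal ?_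
    have h0 : (0:ℝ) ≤ (K ε : ℝ)^2 * (c ε * (δ * ε^2)) := by positivity
    calc ((K ε : ℝ)^2 * (c ε * (δ * ε^2))) ^ (1/2:ℝ)
        ≤ ((t*ε)^2) ^ (1/2:ℝ) := Real.rpow_le_rpow h0 hfinal_real (by norm_num)
      _ = t * ε := by
          rw [← Real.rpow_natCast (t*ε) 2, ← Real.rpow_mul (by positivity)]
          norm_num
  -- decomposition functions
  set F1 : E → ℝ := fun x => ∫ z, (ξ' z - ξe z) ∂(κα ε) x with hF1def
  set F3 : E → ℝ := fun x => ∫ z, (ξe z - ξ' z) ∂(κβ ε) x with hF3def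
  have hF1sm : StronglyMeasurable F1 :=
    ((hξ'sm.comp_measurable measurable_snd).sub
      (hξesm.comp_measurable measurable_snd)).integral_kernel_prod_right'
  have hF3sm : StronglyMeasurable F3 :=
    ((hξesm.comp_measurable measurable_snd).sub
      (hξ'sm.comp_measurable measurable_snd)).integral_kernel_prod_right'
  have hdecomp : (fun x => ((∫ z, ξ z ∂(κα ε) x) - ξ x) / ε - L x) =ᵐ[μ]
      (fun x => ((∫ z, ξ z ∂(κβ ε) x) - ξ x) / ε - L x) +
        ((fun x => ε⁻¹ * F1 x) + ((fun x => ε⁻¹ * Δ x) + fun x => ε⁻¹ * F3 x)) := by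
    filter_upwards [hfactα, hfactβ] with x hfa hfb
    obtain ⟨hξ'iα, hdiα, heqα⟩ := hfa
    obtain ⟨hξ'iβ, hdiβ, heqβ⟩ := hfb
    have hξeiα : Integrable ξe ((κα ε) x) := integrable_of_lipschitz hKε o hdiα
    have hξeiβ : Integrable ξe ((κβ ε) x) := integrable_of_lipschitz hKε o hdiβ
    have e1 : F1 x = (∫ z, ξ' z ∂(κα ε) x) - ∫ z, ξe z ∂(κα ε) x :=
      integral_sub hξ'iα hξeiα
    have e3 : F3 x = (∫ z, ξe z ∂(κβ ε) x) - ∫ z, ξ' z ∂(κβ ε) x :=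
      integral_sub hξeiβ hξ'iβ
    simp only [Pi.add_apply]
    rw [heqα, heqβ, hΔdef, e1, e3]
    field_simp
    ring
  -- measurability for triangle inequality
  have hIβae : AEStronglyMeasurable (fun x => ∫ z, ξ z ∂(κβ ε) x) μ := by
    refine ((StronglyMeasurable.integral_kernel_prod_right' (κ := κβ ε)
      (hξ'sm.comp_measurable measurable_snd)).aestronglyMeasurable).congr ?_
    filter_upwards [hfactβ] with x hfb
    exact hfb.2.2.symm
  have hgβm : AEStronglyMeasurable
      (fun x => ((∫ z, ξ z ∂(κβ ε) x) - ξ x) / ε - L x) μ := by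
    have h := ((hIβae.sub hξ.1).const_mul ε⁻¹).sub hL.1
    refine h.congr (ae_of_all _ fun x => ?_)
    simp [div_eq_inv_mul]
  have hd1m : AEStronglyMeasurable (fun x => ε⁻¹ * F1 x) μ :=
    (hF1sm.const_mul ε⁻¹).aestronglyMeasurable
  have hd2m : AEStronglyMeasurable (fun x => ε⁻¹ * Δ x) μ :=
    (hΔsm.const_mul ε⁻¹).aestronglyMeasurable
  have hd3m : AEStronglyMeasurable (fun x => ε⁻¹ * F3 x) μ :=
    (hF3sm.const_mul ε⁻¹).aestronglyMeasurable
  -- individual bounds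
  have hinv : (‖(ε⁻¹ : ℝ)‖₊ : ℝ≥0∞) = (ENNReal.ofReal ε)⁻¹ := by
    rw [← enorm_eq_nnnorm, Real.enorm_eq_ofReal (by positivity), ENNReal.ofReal_inv_of_pos hεpos]
  have hsmul : ∀ (G : E → ℝ), eLpNorm (fun x => ε⁻¹ * G x) 2 μ
      = (ENNReal.ofReal ε)⁻¹ * eLpNorm G 2 μ := by
    intro G
    have : (fun x => ε⁻¹ * G x) = (ε⁻¹ : ℝ) • G := rfl
    rw [this, eLpNorm_const_smul, enorm_eq_nnnorm, hinv]
  have hd1b : eLpNorm (fun x => ε⁻¹ * F1 x) 2 μ ≤ θ/8 := by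
    rw [hsmul]
    have hF1le : eLpNorm F1 2 μ ≤ eLpNorm (fun x => ξε ε x - ξ x) 2 μ := by
      refine le_trans (eLpNorm_kernel_integral_le hsndα
        (hξ'sm.measurable.sub hξesm.measurable)) ?_
      have hcongr : (fun z => ξ' z - ξe z) =ᵐ[μ] -(fun x => ξε ε x - ξ x) := by
        filter_upwards [hξae] with z hz
        simp only [Pi.neg_apply]
        rw [← hz, hξedef]
        ring
      rw [eLpNorm_congr_ae hcongr, eLpNorm_neg]
    calc (ENNReal.ofReal ε)⁻¹ * eLpNorm F1 2 μ
        ≤ (ENNReal.ofReal ε)⁻¹ * eLpNorm (fun x => ξε ε x - ξ x) 2 μ :=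
          mul_le_mul_right hF1le _
      _ = eLpNorm (fun x => ξε ε x - ξ x) 2 μ / ENNReal.ofReal ε := by
          rw [ENNReal.div_eq_inv_mul]
      _ ≤ θ/8 := hξaε
  have hd3b : eLpNorm (fun x => ε⁻¹ * F3 x) 2 μ ≤ θ/8 := by
    rw [hsmul]
    have hF3le : eLpNorm F3 2 μ ≤ eLpNorm (fun x => ξε ε x - ξ x) 2 μ := by
      refine le_trans (eLpNorm_kernel_integral_le hsndβ
        (hξesm.measurable.sub hξ'sm.measurable)) ?_
      refine le_of_eq (eLpNorm_congr_ae ?_)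
      filter_upwards [hξae] with z hz
      rw [← hz, hξedef]
    calc (ENNReal.ofReal ε)⁻¹ * eLpNorm F3 2 μ
        ≤ (ENNReal.ofReal ε)⁻¹ * eLpNorm (fun x => ξε ε x - ξ x) 2 μ :=
          mul_le_mul_right hF3le _
      _ = eLpNorm (fun x => ξε ε x - ξ x) 2 μ / ENNReal.ofReal ε := by
          rw [ENNReal.div_eq_inv_mul]
      _ ≤ θ/8 := hξaε
  have hd2b : eLpNorm (fun x => ε⁻¹ * Δ x) 2 μ ≤ θ/4 := by
    rw [hsmul]
    calc (ENNReal.ofReal ε)⁻¹ * eLpNorm Δ 2 μ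
        ≤ (ENNReal.ofReal ε)⁻¹ * ENNReal.ofReal (t * ε) := mul_le_mul_right hΔe2 _
      _ = ENNReal.ofReal (t * ε) / ENNReal.ofReal ε := by rw [ENNReal.div_eq_inv_mul]
      _ = ENNReal.ofReal ((t * ε) / ε) := (ENNReal.ofReal_div_of_pos hεpos).symm
      _ = ENNReal.ofReal t := by rw [mul_div_assoc, div_self hεne, mul_one]
      _ ≤ θ/4 := htθ
  -- assemble
  calc eLpNorm (fun x => ((∫ z, ξ z ∂(κα ε) x) - ξ x) / ε - L x) 2 μ
      = eLpNorm ((fun x => ((∫ z, ξ z ∂(κβ ε) x) - ξ x) / ε - L x) +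
          ((fun x => ε⁻¹ * F1 x) + ((fun x => ε⁻¹ * Δ x) + fun x => ε⁻¹ * F3 x))) 2 μ :=
        eLpNorm_congr_ae hdecomp
    _ ≤ eLpNorm (fun x => ((∫ z, ξ z ∂(κβ ε) x) - ξ x) / ε - L x) 2 μ +
          eLpNorm ((fun x => ε⁻¹ * F1 x) + ((fun x => ε⁻¹ * Δ x) + fun x => ε⁻¹ * F3 x)) 2 μ :=
        eLpNorm_add_le hgβm (hd1m.add (hd2m.add hd3m)) one_le_two
    _ ≤ eLpNorm (fun x => ((∫ z, ξ z ∂(κβ ε) x) - ξ x) / ε - L x) 2 μ +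
          (eLpNorm (fun x => ε⁻¹ * F1 x) 2 μ +
            eLpNorm ((fun x => ε⁻¹ * Δ x) + fun x => ε⁻¹ * F3 x) 2 μ) := by
        exact add_le_add_right (eLpNorm_add_le hd1m (hd2m.add hd3m) one_le_two) _
    _ ≤ eLpNorm (fun x => ((∫ z, ξ z ∂(κβ ε) x) - ξ x) / ε - L x) 2 μ +
          (eLpNorm (fun x => ε⁻¹ * F1 x) 2 μ +
            (eLpNorm (fun x => ε⁻¹ * Δ x) 2 μ + eLpNorm (fun x => ε⁻¹ * F3 x) 2 μ)) := by
        exact add_le_add_right (add_le_add_right (eLpNorm_add_le hd2m hd3m one_le_two) _) _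
    _ ≤ θ/4 + (θ/8 + (θ/4 + θ/8)) := by
        exact add_le_add hβε (add_le_add hd1b (add_le_add hd2b hd3b))
    _ ≤ θ := by
        calc θ/4 + (θ/8 + (θ/4 + θ/8)) ≤ θ/4 + (θ/4 + (θ/4 + θ/4)) := by gcongr <;> norm_num
          _ = θ := by
              rw [ENNReal.div_add_div_same, ENNReal.div_add_div_same, ENNReal.div_add_div_same,
                show θ+(θ+(θ+θ)) = 4*θ by ring]
              rw [mul_comm, mul_div_assoc, ENNReal.div_self (by norm_num) (by norm_num), mul_one]
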